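/- arXiv:1802.07077 — 4 statements merged into one kernel-verified Lean document; each statement's English description precedes it below -/
import Mathlib

section
/- The d-dimensional Mehler kernel g_λ(x,t,y) = (2π sinh(λt)/λ)^{-d/2} exp[-λ(cosh(λt)(|x|²+|y|²) - 2⟨x,y⟩)/(2 sinh(λt))] satisfies the semigroup (Chapman–Kolmogorov) composition law: ∫_{ℝ^d} g_λ(x,s,z) g_λ(z,t,y) dz = g_λ(x,s+t,y) for all x,y ∈ ℝ^d and s,t > 0. -/
open Real MeasureTheory
open scoped RealInnerProductSpace

lemma mehler_gauss_int {d : ℕ} {b : ℝ} (hb : 0 < b) (w : EuclideanSpace ℝ (Fin d)) :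
    ∫ v : EuclideanSpace ℝ (Fin d), Real.exp (-b * ‖v‖ ^ 2 + ⟪w, v⟫) =
      (Real.pi / b) ^ ((d : ℝ) / 2) * Real.exp (‖w‖ ^ 2 / (4 * b)) := by
  have h := GaussianFourier.integral_cexp_neg_mul_sq_norm_add
    (V := EuclideanSpace ℝ (Fin d)) (b := (b : ℂ)) (by simpa using hb) 1 w
  rw [← Complex.ofReal_inj]
  rw [show ((∫ v : EuclideanSpace ℝ (Fin d), Real.exp (-b * ‖v‖ ^ 2 + ⟪w, v⟫) : ℝ) : ℂ)
      = ∫ v : EuclideanSpace ℝ (Fin d), ((Real.exp (-b * ‖v‖ ^ 2 + ⟪w, v⟫) : ℝ) : ℂ)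
    from (integral_ofReal).symm]
  have h2 : ∀ v : EuclideanSpace ℝ (Fin d),
      ((Real.exp (-b * ‖v‖ ^ 2 + ⟪w, v⟫) : ℝ) : ℂ)
        = Complex.exp (-(b : ℂ) * (‖v‖ : ℂ) ^ 2 + 1 * (⟪w, v⟫ : ℝ)) := by
    intro v
    push_cast [Complex.ofReal_exp]
    ring_nf
  simp_rw [h2]
  rw [h]
  rw [finrank_euclideanSpace_fin]
  rw [Complex.ofReal_mul, Complex.ofReal_cpow (by positivity), Complex.ofReal_exp]
  push_cast
  ring_nf

lemma mehler_keyexp (S T Cs Ct lam X Y P : ℝ) (hS : S ≠ 0) (hT : T ≠ 0) (hl : lam ≠ 0)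
    (hU : S * Ct + Cs * T ≠ 0) (hCs : Cs ^ 2 = 1 + S ^ 2) (hCt : Ct ^ 2 = 1 + T ^ 2) :
    (-(lam * (Cs * X)) / (2 * S) + -(lam * (Ct * Y)) / (2 * T)) +
      ((lam / S) ^ 2 * X + 2 * ((lam / S) * (lam / T)) * P + (lam / T) ^ 2 * Y) /
        (4 * (lam * (S * Ct + Cs * T) / (2 * S * T)))
    = -(lam * ((Cs * Ct + S * T) * (X + Y) - 2 * P)) / (2 * (S * Ct + Cs * T)) := by
  field_simp
  linear_combination (-4*X*T^2) * hCs + (-4*S^2*Y) * hCt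

lemma mehler_keypref {a b c u : ℝ} (e : ℝ) (ha : 0 < a) (hb : 0 < b) (hu : 0 < u)
    (h : c = a * b / u) : a ^ (-e) * b ^ (-e) * c ^ e = u ^ (-e) := by
  subst h
  rw [Real.div_rpow (by positivity) hu.le, Real.mul_rpow ha.le hb.le,
      Real.rpow_neg ha.le, Real.rpow_neg hb.le, Real.rpow_neg hu.le]
  have h1 : a ^ e ≠ 0 := by positivity
  have h2 : b ^ e ≠ 0 := by positivity
  have h3 : u ^ e ≠ 0 := by positivity
  field_simp


noncomputable def mehler (d : ℕ) (lam : ℝ) (x : EuclideanSpace ℝ (Fin d)) (t : ℝ)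
    (y : EuclideanSpace ℝ (Fin d)) : ℝ :=
  (2 * Real.pi * Real.sinh (lam * t) / lam) ^ (-(d : ℝ) / 2) *
    Real.exp (-(lam * (Real.cosh (lam * t) * (‖x‖ ^ 2 + ‖y‖ ^ 2) - 2 * ⟪x, y⟫)) /
      (2 * Real.sinh (lam * t)))

theorem mehler_chapman_kolmogorov (d : ℕ) (hd : 0 < d) (lam : ℝ) (hlam : 0 < lam)
    (x y : EuclideanSpace ℝ (Fin d)) (s t : ℝ) (hs : 0 < s) (ht : 0 < t) :
    ∫ z : EuclideanSpace ℝ (Fin d), mehler d lam x s z * mehler d lam z t y =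
      mehler d lam x (s + t) y := by
  set S := Real.sinh (lam * s) with hSdef
  set T := Real.sinh (lam * t) with hTdef
  set Cs := Real.cosh (lam * s) with hCsdef
  set Ct := Real.cosh (lam * t) with hCtdef
  have hS : 0 < S := Real.sinh_pos_iff.mpr (by positivity)
  have hT : 0 < T := Real.sinh_pos_iff.mpr (by positivity)
  have hUeq : Real.sinh (lam * (s + t)) = S * Ct + Cs * T := by
    rw [mul_add, Real.sinh_add]
  have hCueq : Real.cosh (lam * (s + t)) = Cs * Ct + S * T := by
    rw [mul_add, Real.cosh_add]
  have hU : 0 < S * Ct + Cs * T :=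
    add_pos (mul_pos hS (Real.cosh_pos _)) (mul_pos (Real.cosh_pos _) hT)
  have hCs2 : Cs ^ 2 = 1 + S ^ 2 := by
    rw [hCsdef, hSdef, Real.cosh_sq]; ring
  have hCt2 : Ct ^ 2 = 1 + T ^ 2 := by
    rw [hCtdef, hTdef, Real.cosh_sq]; ring
  set A : ℝ := lam * (S * Ct + Cs * T) / (2 * S * T) with hAdef
  have hA : 0 < A := by positivity
  set w : EuclideanSpace ℝ (Fin d) := (lam / S) • x + (lam / T) • y with hwdef
  have hwz : ∀ z : EuclideanSpace ℝ (Fin d),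
      ⟪w, z⟫ = (lam / S) * ⟪x, z⟫ + (lam / T) * ⟪y, z⟫ := by
    intro z
    rw [hwdef, inner_add_left, real_inner_smul_left, real_inner_smul_left]
  have h1 : ∀ z : EuclideanSpace ℝ (Fin d),
      mehler d lam x s z * mehler d lam z t y =
      ((2 * Real.pi * S / lam) ^ (-(d : ℝ) / 2) * (2 * Real.pi * T / lam) ^ (-(d : ℝ) / 2) *
        Real.exp (-(lam * (Cs * ‖x‖ ^ 2)) / (2 * S) + -(lam * (Ct * ‖y‖ ^ 2)) / (2 * T))) *
      Real.exp (-A * ‖z‖ ^ 2 + ⟪w, z⟫) := by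
    intro z
    simp only [mehler]
    rw [← hSdef, ← hTdef, ← hCsdef, ← hCtdef, hwz z, real_inner_comm y z]
    rw [mul_mul_mul_comm, ← Real.exp_add]
    conv_rhs => rw [mul_assoc, ← Real.exp_add]
    congr 1
    rw [hAdef]
    field_simp
    ring
  rw [funext h1, integral_const_mul, mehler_gauss_int hA w]
  have hw2 : ‖w‖ ^ 2 = (lam / S) ^ 2 * ‖x‖ ^ 2 +
      2 * ((lam / S) * (lam / T)) * ⟪x, y⟫ + (lam / T) ^ 2 * ‖y‖ ^ 2 := by
    rw [hwdef, norm_add_sq_real, norm_smul, norm_smul, real_inner_smul_left,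
      real_inner_smul_right, mul_pow, mul_pow, Real.norm_eq_abs, Real.norm_eq_abs,
      sq_abs, sq_abs]
    ring
  have hexp : (-(lam * (Cs * ‖x‖ ^ 2)) / (2 * S) + -(lam * (Ct * ‖y‖ ^ 2)) / (2 * T)) +
      ‖w‖ ^ 2 / (4 * A) =
      -(lam * (Real.cosh (lam * (s + t)) * (‖x‖ ^ 2 + ‖y‖ ^ 2) - 2 * ⟪x, y⟫)) /
        (2 * Real.sinh (lam * (s + t))) := by
    rw [hw2, hUeq, hCueq, hAdef]
    exact mehler_keyexp S T Cs Ct lam (‖x‖ ^ 2) (‖y‖ ^ 2) ⟪x, y⟫ hS.ne' hT.ne' hlam.ne'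
      hU.ne' hCs2 hCt2
  have hpref : (2 * Real.pi * S / lam) ^ (-(d : ℝ) / 2) *
      (2 * Real.pi * T / lam) ^ (-(d : ℝ) / 2) * (Real.pi / A) ^ ((d : ℝ) / 2) =
      (2 * Real.pi * Real.sinh (lam * (s + t)) / lam) ^ (-(d : ℝ) / 2) := by
    rw [show -(d : ℝ) / 2 = -((d : ℝ) / 2) from by ring]
    apply mehler_keypref ((d : ℝ) / 2) (by positivity) (by positivity)
      (by rw [hUeq]; positivity)
    rw [hUeq, hAdef]
    have hpi := Real.pi_pos
    field_simp
  simp only [mehler]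
  rw [← hpref, ← hexp]
  simp only [Real.exp_add]
  ring
end

section
/- For λ > 0 and T > 0, the diagonal of the Mehler kernel satisfies g_λ(x,T,x) = (λ/(2π sinh(λT)))^{d/2} exp[-λ(cosh(λT)-1)|x|²/sinh(λT)], and consequently ∫_{ℝ^d} g_λ(x,T,x) dx = (2(cosh(λT)-1))^{-d/2} = 𝒵_λ(T). -/
open Real MeasureTheory
open scoped RealInnerProductSpace

set_option maxHeartbeats 1000000 in
lemma hasSum_pi_geom (r : ℝ) (h0 : 0 ≤ r) (h1 : r < 1) :
    ∀ d : ℕ, HasSum (fun m : Fin d → ℕ => ∏ j, r ^ m j) ((1 - r)⁻¹ ^ d) := by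
  intro d
  induction d with
  | zero =>
    have h := hasSum_single (f := fun m : Fin 0 → ℕ => ∏ j, r ^ m j) default
      (fun b hb => (hb (Subsingleton.elim b default)).elim)
    simpa using h
  | succ n ih =>
    have hgeo : HasSum (fun k : ℕ => r ^ k) (1 - r)⁻¹ :=
      hasSum_geometric_of_lt_one h0 h1
    have hsum : Summable fun p : ℕ × (Fin n → ℕ) => r ^ p.1 * ∏ j, r ^ p.2 j :=
      Summable.mul_of_nonneg (f := fun k : ℕ => r ^ k)
        (g := fun m : Fin n → ℕ => ∏ j, r ^ m j) hgeo.summable ih.summable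
        (fun k => pow_nonneg h0 k)
        (fun m => Finset.prod_nonneg fun j _ => pow_nonneg h0 _)
    have hmul := hgeo.mul ih hsum
    have key := (Equiv.hasSum_iff (f := fun m : Fin (n+1) → ℕ => ∏ j, r ^ m j)
      (a := (1 - r)⁻¹ * (1 - r)⁻¹ ^ n) (Fin.consEquiv (fun _ => ℕ))).mp ?_
    · have : (1 - r)⁻¹ * (1 - r)⁻¹ ^ n = (1 - r)⁻¹ ^ (n + 1) := by ring
      rwa [this] at key
    · convert hmul using 1
      · rfl
      · funext p
        simp [Fin.consEquiv, Function.comp, Fin.prod_univ_succ]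

theorem mehler_diagonal (d : ℕ) (hd : 0 < d) (lam T : ℝ) (hlam : 0 < lam) (hT : 0 < T) :
    (∀ x : EuclideanSpace ℝ (Fin d),
        mehler d lam x T x =
          (lam / (2 * Real.pi * Real.sinh (lam * T))) ^ ((d : ℝ) / 2) *
            Real.exp (-(lam * (Real.cosh (lam * T) - 1) * ‖x‖ ^ 2 / Real.sinh (lam * T)))) ∧
    (∫ x : EuclideanSpace ℝ (Fin d), mehler d lam x T x) =
        (2 * (Real.cosh (lam * T) - 1)) ^ (-(d : ℝ) / 2) ∧
    (∫ x : EuclideanSpace ℝ (Fin d), mehler d lam x T x) =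
        ∑' m : Fin d → ℕ, Real.exp (-(T * ((∑ j, (m j : ℝ)) + d / 2) * lam)) := by
  set s : ℝ := lam * T with hs
  have hspos : 0 < s := mul_pos hlam hT
  have hsh : 0 < Real.sinh s := Real.sinh_pos_iff.mpr hspos
  have hch : 1 < Real.cosh s := Real.one_lt_cosh.mpr (ne_of_gt hspos)
  have hch1 : 0 < Real.cosh s - 1 := by linarith
  have hpi : (0 : ℝ) < Real.pi := Real.pi_pos
  have hA : (0 : ℝ) < 2 * Real.pi * Real.sinh s / lam := by positivity
  -- Part 1
  have h1 : ∀ x : EuclideanSpace ℝ (Fin d),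
      mehler d lam x T x =
        (lam / (2 * Real.pi * Real.sinh s)) ^ ((d : ℝ) / 2) *
          Real.exp (-(lam * (Real.cosh s - 1) * ‖x‖ ^ 2 / Real.sinh s)) := by
    intro x
    unfold mehler
    rw [← hs]
    congr 1
    · rw [neg_div, Real.rpow_neg hA.le, ← Real.inv_rpow hA.le, inv_div]
    · congr 1
      rw [real_inner_self_eq_norm_sq]
      field_simp
      ring
  refine ⟨h1, ?_⟩
  -- the Gaussian integral
  set b : ℝ := lam * (Real.cosh s - 1) / Real.sinh s with hb
  have hbpos : 0 < b := by positivity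
  have hint : (∫ x : EuclideanSpace ℝ (Fin d), mehler d lam x T x) =
      (2 * (Real.cosh s - 1)) ^ (-(d : ℝ) / 2) := by
    have heq : ∀ x : EuclideanSpace ℝ (Fin d),
        mehler d lam x T x =
          (lam / (2 * Real.pi * Real.sinh s)) ^ ((d : ℝ) / 2) *
            Real.exp (-b * ‖x‖ ^ 2) := by
      intro x
      rw [h1 x]
      congr 2
      rw [hb]; ring
    rw [integral_congr_ae (Filter.Eventually.of_forall heq), integral_const_mul,
      GaussianFourier.integral_rexp_neg_mul_sq_norm hbpos, finrank_euclideanSpace_fin,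
      ← Real.mul_rpow (by positivity) (by positivity)]
    have hx : lam / (2 * Real.pi * Real.sinh s) * (Real.pi / b) = (2 * (Real.cosh s - 1))⁻¹ := by
      rw [hb]
      field_simp
    rw [hx, Real.inv_rpow (by positivity), ← Real.rpow_neg (by positivity), neg_div]
  refine ⟨hint, ?_⟩
  -- the theta sum
  set r : ℝ := Real.exp (-s) with hr
  have hr0 : 0 ≤ r := (Real.exp_pos _).le
  have hr1 : r < 1 := Real.exp_lt_one_iff.mpr (by linarith)
  have hterm : ∀ m : Fin d → ℕ,
      Real.exp (-(T * ((∑ j, (m j : ℝ)) + d / 2) * lam)) =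
        Real.exp (-s / 2) ^ d * ∏ j, r ^ m j := by
    intro m
    rw [Finset.prod_pow_eq_pow_sum, hr, ← Real.exp_nat_mul, ← Real.exp_nat_mul,
      ← Real.exp_add]
    congr 1
    push_cast
    rw [hs]
    ring
  have htsum : (∑' m : Fin d → ℕ, Real.exp (-(T * ((∑ j, (m j : ℝ)) + d / 2) * lam))) =
      Real.exp (-s / 2) ^ d * ((1 - r)⁻¹ ^ d) := by
    rw [tsum_congr hterm, tsum_mul_left, (hasSum_pi_geom r hr0 hr1 d).tsum_eq]
  rw [hint, htsum]
  -- identify the closed forms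
  set u : ℝ := Real.exp (s / 2) - Real.exp (-(s / 2)) with hu
  have hupos : 0 < u := by
    rw [hu]
    have : Real.exp (-(s / 2)) < Real.exp (s / 2) := Real.exp_lt_exp.mpr (by linarith)
    linarith
  have h2ch : 2 * (Real.cosh s - 1) = u ^ 2 := by
    rw [Real.cosh_eq, hu]
    have e1 : Real.exp s = Real.exp (s / 2) * Real.exp (s / 2) := by
      rw [← Real.exp_add]; ring_nf
    have e2 : Real.exp (-s) = Real.exp (-(s / 2)) * Real.exp (-(s / 2)) := by
      rw [← Real.exp_add]; ring_nf
    have e3 : Real.exp (s / 2) * Real.exp (-(s / 2)) = 1 := by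
      rw [← Real.exp_add]; simp
    nlinarith [e1, e2, e3]
  have hfrac : Real.exp (-s / 2) / (1 - r) = u⁻¹ := by
    rw [hr, hu]
    have e3 : Real.exp (s / 2) * Real.exp (-(s / 2)) = 1 := by
      rw [← Real.exp_add]; norm_num
    have hne : 1 - Real.exp (-s) ≠ 0 := by
      have : Real.exp (-s) < 1 := Real.exp_lt_one_iff.mpr (by linarith)
      linarith
    rw [inv_eq_one_div, div_eq_div_iff hne (by rw [← hu]; exact ne_of_gt hupos)]
    have e4 : Real.exp (-s / 2) * Real.exp (s / 2) = 1 := by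
      rw [← Real.exp_add, show -s / 2 + s / 2 = 0 by ring, Real.exp_zero]
    have e5 : Real.exp (-s / 2) * Real.exp (-(s / 2)) = Real.exp (-s) := by
      rw [← Real.exp_add]; ring_nf
    nlinarith [e4, e5]
  rw [h2ch, ← Real.rpow_natCast u 2, ← Real.rpow_mul hupos.le]
  have : ((2 : ℕ) : ℝ) * (-(d : ℝ) / 2) = -(d : ℝ) := by push_cast; ring
  rw [this, Real.rpow_neg hupos.le, Real.rpow_natCast, ← inv_pow, ← hfrac,
    div_eq_mul_inv, mul_pow]
end

section
/- The function x ↦ 𝒵_λ(T)^{-1} g_λ(x,T,x) is the centered Gaussian probability density on ℝ^d with variance σ_λ = sinh(λT)/(2λ(cosh(λT)-1)), i.e. it equals (2πσ_λ)^{-d/2} exp[-|x|²/(2σ_λ)]. -/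
open Real MeasureTheory
open scoped RealInnerProductSpace

theorem mehler_diagonal_gaussian_density (d : ℕ) (hd : 0 < d) (lam T : ℝ)
    (hlam : 0 < lam) (hT : 0 < T) (x : EuclideanSpace ℝ (Fin d)) :
    ((2 * (Real.cosh (lam * T) - 1)) ^ (-(d : ℝ) / 2))⁻¹ * mehler d lam x T x =
      (2 * Real.pi * (Real.sinh (lam * T) / (2 * lam * (Real.cosh (lam * T) - 1)))) ^
          (-(d : ℝ) / 2) *
        Real.exp (-‖x‖ ^ 2 /
          (2 * (Real.sinh (lam * T) / (2 * lam * (Real.cosh (lam * T) - 1))))) := by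
  have hlt : 0 < lam * T := mul_pos hlam hT
  have hs : 0 < Real.sinh (lam * T) := Real.sinh_pos_iff.mpr hlt
  have hc : 1 < Real.cosh (lam * T) := by
    have := Real.one_lt_cosh.mpr (ne_of_gt hlt)
    simpa using this
  have hc1 : 0 < Real.cosh (lam * T) - 1 := by linarith
  unfold mehler
  rw [real_inner_self_eq_norm_sq]
  rw [show 2 * Real.pi * (Real.sinh (lam * T) / (2 * lam * (Real.cosh (lam * T) - 1)))
      = (2 * Real.pi * Real.sinh (lam * T) / lam) / (2 * (Real.cosh (lam * T) - 1)) by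
    field_simp]
  rw [show ((2 * Real.pi * Real.sinh (lam * T) / lam) / (2 * (Real.cosh (lam * T) - 1)))
        ^ (-(d : ℝ) / 2)
      = ((2 * (Real.cosh (lam * T) - 1)) ^ (-(d : ℝ) / 2))⁻¹ *
        (2 * Real.pi * Real.sinh (lam * T) / lam) ^ (-(d : ℝ) / 2) by
    rw [Real.div_rpow (by positivity) (by positivity), div_eq_mul_inv, mul_comm]]
  rw [show -(lam * (Real.cosh (lam * T) * (‖x‖ ^ 2 + ‖x‖ ^ 2) - 2 * ‖x‖ ^ 2)) /
      (2 * Real.sinh (lam * T))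
      = -‖x‖ ^ 2 / (2 * (Real.sinh (lam * T) / (2 * lam * (Real.cosh (lam * T) - 1)))) by
    field_simp; ring]
  ring
end

section
/- For 0 ≤ s ≤ t ≤ T and λ > 0, the function C(s,t) = cosh(λ(|t-s| - T/2))/(2λ sinh(λT/2)) equals (exp(-λ|t-s|) + exp(-λ(T - |t-s|)))/(2λ(1 - exp(-λT))), and for 0 ≤ t₁ ≤ t₂ ≤ T the 2×2 matrix with entries C(t_i, t_j) is positive semidefinite. -/
theorem periodic_OU_covariance (lam T : ℝ) (hlam : 0 < lam) (hT : 0 < T) :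
    let C : ℝ → ℝ → ℝ := fun s t =>
      Real.cosh (lam * (|t - s| - T / 2)) / (2 * lam * Real.sinh (lam * T / 2))
    (∀ s t, 0 ≤ s → s ≤ t → t ≤ T →
      C s t = (Real.exp (-(lam * |t - s|)) + Real.exp (-(lam * (T - |t - s|)))) /
        (2 * lam * (1 - Real.exp (-(lam * T))))) ∧
    (∀ t₁ t₂, 0 ≤ t₁ → t₁ ≤ t₂ → t₂ ≤ T →
      (Matrix.of ![![C t₁ t₁, C t₁ t₂], ![C t₂ t₁, C t₂ t₂]]).PosSemidef) := by
  intro C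
  have hsinh : 0 < Real.sinh (lam * T / 2) := by
    apply Real.sinh_pos_iff.2; positivity
  constructor
  · intro s t hs hst htT
    set d := |t - s| with hd
    have h1 : Real.exp (-(lam * d)) + Real.exp (-(lam * (T - d))) =
        Real.exp (-(lam * T / 2)) * (2 * Real.cosh (lam * (d - T / 2))) := by
      rw [Real.cosh_eq,
        show (2 : ℝ) * ((Real.exp (lam * (d - T / 2)) + Real.exp (-(lam * (d - T / 2)))) / 2) =
          Real.exp (lam * (d - T / 2)) + Real.exp (-(lam * (d - T / 2))) by ring,
        mul_add, ← Real.exp_add, ← Real.exp_add,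
        show -(lam * T / 2) + lam * (d - T / 2) = -(lam * (T - d)) by ring,
        show -(lam * T / 2) + -(lam * (d - T / 2)) = -(lam * d) by ring]
      ring
    have h2 : 1 - Real.exp (-(lam * T)) =
        Real.exp (-(lam * T / 2)) * (2 * Real.sinh (lam * T / 2)) := by
      rw [Real.sinh_eq,
        show (2 : ℝ) * ((Real.exp (lam * T / 2) - Real.exp (-(lam * T / 2))) / 2) =
          Real.exp (lam * T / 2) - Real.exp (-(lam * T / 2)) by ring,
        mul_sub, ← Real.exp_add, ← Real.exp_add,
        show -(lam * T / 2) + lam * T / 2 = 0 by ring,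
        show -(lam * T / 2) + -(lam * T / 2) = -(lam * T) by ring, Real.exp_zero]
    show Real.cosh (lam * (d - T / 2)) / (2 * lam * Real.sinh (lam * T / 2)) = _
    rw [h1, h2]
    have he : Real.exp (-(lam * T / 2)) ≠ 0 := Real.exp_ne_zero _
    field_simp
  · intro t₁ t₂ h1 h12 h2T
    have hd0 : |t₂ - t₁| = t₂ - t₁ := abs_of_nonneg (by linarith)
    have hDpos : 0 < 2 * lam * Real.sinh (lam * T / 2) := by positivity
    set a := C t₁ t₁ with ha
    set b := C t₁ t₂ with hb
    have hba : C t₂ t₁ = b := by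
      simp only [hb, C, abs_sub_comm]
    have haa : C t₂ t₂ = a := by simp only [ha, C, sub_self]
    have hbpos : 0 ≤ b := by
      apply div_nonneg (Real.cosh_pos _).le (le_of_lt hDpos)
    have hab : b ≤ a := by
      simp only [ha, hb, C, sub_self, abs_zero, hd0]
      apply (div_le_div_iff_of_pos_right hDpos).mpr
      apply Real.cosh_le_cosh.2
      rw [abs_mul, abs_mul, abs_of_pos hlam]
      apply mul_le_mul_of_nonneg_left _ hlam.le
      rw [abs_le]
      constructor
      · have : |(0:ℝ) - T / 2| = T / 2 := by rw [abs_of_nonpos (by linarith)]; ring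
        rw [this]; linarith
      · have : |(0:ℝ) - T / 2| = T / 2 := by rw [abs_of_nonpos (by linarith)]; ring
        rw [this]
        have : 0 ≤ t₂ - t₁ := by linarith
        have : |t₂ - t₁| = t₂ - t₁ := abs_of_nonneg this
        linarith [abs_nonneg (t₂ - t₁)]
    rw [hba, haa]
    refine Matrix.PosSemidef.of_dotProduct_mulVec_nonneg ?_ ?_
    · ext i j
      fin_cases i <;> fin_cases j <;>
        simp [Matrix.conjTranspose_apply]
    · intro x
      simp only [dotProduct, Matrix.mulVec, Fin.sum_univ_two, Matrix.of_apply,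
        Matrix.cons_val', Matrix.cons_val_zero, Matrix.cons_val_one, Matrix.head_cons,
        Matrix.empty_val', Matrix.cons_val_fin_one, Matrix.head_fin_const, Pi.star_apply,
        star_trivial]
      nlinarith [mul_nonneg (sub_nonneg.2 hab) (sq_nonneg (x 0 - x 1)),
        mul_nonneg (by linarith : (0:ℝ) ≤ a + b) (sq_nonneg (x 0 + x 1))]
end
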